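/- If the graph H is a TRVG, then the join of H with an independent set of two vertices (i.e., the graph obtained from H by adding two new mutually non-adjacent vertices each adjacent to all vertices of H) is also a TRVG. -/

import Mathlib

structure Rect where
  x1 : ℝ
  x2 : ℝ
  y1 : ℝ
  y2 : ℝ
  hx : x1 < x2
  hy : y1 < y2

def Rect.pts (R : Rect) : Set (ℝ × ℝ) := Set.Icc R.x1 R.x2 ×ˢ Set.Icc R.y1 R.y2

def seesV (R S : Rect) : Prop := (Set.Ioo R.x1 R.x2 ∩ Set.Ioo S.x1 S.x2).Nonempty

def seesH (R S : Rect) : Prop := (Set.Ioo R.y1 R.y2 ∩ Set.Ioo S.y1 S.y2).Nonempty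

def sees (R S : Rect) : Prop := seesV R S ∨ seesH R S

def IsTRVG {V : Type*} (G : SimpleGraph V) : Prop :=
  ∃ f : V → Rect,
    (∀ u v : V, u ≠ v → Disjoint (f u).pts (f v).pts) ∧
    (∀ u v : V, u ≠ v → (G.Adj u v ↔ sees (f u) (f v)))

/-- The join of a graph H with two new mutually non-adjacent universal vertices. -/
def joinTwo {V : Type*} (H : SimpleGraph V) : SimpleGraph (V ⊕ Fin 2) where
  Adj u v :=
    match u, v with
    | Sum.inl a, Sum.inl b => H.Adj a b
    | Sum.inl _, Sum.inr _ => True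
    | Sum.inr _, Sum.inl _ => True
    | Sum.inr _, Sum.inr _ => False
  symm := by
    constructor
    rintro (a | a) (b | b) h
    · exact h.symm
    · trivial
    · trivial
    · exact h
  loopless := by
    constructor
    rintro (a | a) h
    · exact H.irrefl h
    · exact h

open Real Set

noncomputable def trRect (R : Rect) : Rect where
  x1 := Real.arctan R.x1
  x2 := Real.arctan R.x2
  y1 := Real.arctan R.y1
  y2 := Real.arctan R.y2
  hx := Real.arctan_strictMono R.hx
  hy := Real.arctan_strictMono R.hy

lemma pi_div_two_lt_two : π / 2 < 2 := by
  have := Real.pi_lt_d2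
  linarith

lemma arctan_lt_two (x : ℝ) : Real.arctan x < 2 :=
  (Real.arctan_lt_pi_div_two x).trans pi_div_two_lt_two

lemma neg_two_lt_arctan (x : ℝ) : -2 < Real.arctan x := by
  have := Real.neg_pi_div_two_lt_arctan x
  have := pi_div_two_lt_two
  linarith

lemma ioo_arctan (a b : ℝ) : Set.Ioo (Real.arctan a) (Real.arctan b) ⊆ Set.Ioo (-2 : ℝ) 2 := by
  intro t ht
  exact ⟨(neg_two_lt_arctan a).trans ht.1, ht.2.trans (arctan_lt_two b)⟩

lemma seesV_tr (R S : Rect) : seesV (trRect R) (trRect S) ↔ seesV R S := by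
  unfold seesV trRect
  simp only [Set.Ioo_inter_Ioo, Set.nonempty_Ioo,
    Real.arctan_strictMono.monotone.map_max.symm, Real.arctan_strictMono.monotone.map_min.symm,
    Real.arctan_strictMono.lt_iff_lt]

lemma seesH_tr (R S : Rect) : seesH (trRect R) (trRect S) ↔ seesH R S := by
  unfold seesH trRect
  simp only [Set.Ioo_inter_Ioo, Set.nonempty_Ioo,
    Real.arctan_strictMono.monotone.map_max.symm, Real.arctan_strictMono.monotone.map_min.symm,
    Real.arctan_strictMono.lt_iff_lt]

lemma sees_tr (R S : Rect) : sees (trRect R) (trRect S) ↔ sees R S := by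
  unfold sees; rw [seesV_tr, seesH_tr]

lemma disjoint_tr {R S : Rect} (h : Disjoint R.pts S.pts) :
    Disjoint (trRect R).pts (trRect S).pts := by
  rw [Set.disjoint_left] at h ⊢
  rintro ⟨p, q⟩ hp hq
  have hmem : ∀ a b t : ℝ, t ∈ Set.Icc (Real.arctan a) (Real.arctan b) →
      Real.tan t ∈ Set.Icc a b := by
    intro a b t ht
    have h1 : -(π/2) < t := lt_of_lt_of_le (Real.neg_pi_div_two_lt_arctan a) ht.1
    have h2 : t < π/2 := lt_of_le_of_lt ht.2 (Real.arctan_lt_pi_div_two b)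
    have hat : Real.arctan (Real.tan t) = t := Real.arctan_tan h1 h2
    constructor
    · exact Real.arctan_strictMono.le_iff_le.mp (by rw [hat]; exact ht.1)
    · exact Real.arctan_strictMono.le_iff_le.mp (by rw [hat]; exact ht.2)
  exact h (show (Real.tan p, Real.tan q) ∈ R.pts from
      ⟨hmem _ _ _ hp.1, hmem _ _ _ hp.2⟩)
    ⟨hmem _ _ _ hq.1, hmem _ _ _ hq.2⟩

noncomputable def rectA : Rect := ⟨2, 3, -2, 2, by norm_num, by norm_num⟩
noncomputable def rectB : Rect := ⟨-2, 2, 3, 4, by norm_num, by norm_num⟩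

/-- If H is a TRVG, then the join of H with an independent set of two vertices is a TRVG. -/
theorem stmt9 {V : Type*} (H : SimpleGraph V) (h : IsTRVG H) : IsTRVG (joinTwo H) := by
  obtain ⟨f, hdisj, hadj⟩ := h
  refine ⟨Sum.elim (fun v => trRect (f v)) (fun i => if i = 0 then rectA else rectB), ?_, ?_⟩
  · -- disjointness
    have hsmallA : ∀ v : V, Disjoint (trRect (f v)).pts rectA.pts := by
      intro v
      rw [Set.disjoint_left]
      rintro ⟨p, q⟩ hp hq
      have h1 : p < 2 := lt_of_le_of_lt hp.1.2 (arctan_lt_two _)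
      exact absurd hq.1.1 (by simp [rectA]; linarith)
    have hsmallB : ∀ v : V, Disjoint (trRect (f v)).pts rectB.pts := by
      intro v
      rw [Set.disjoint_left]
      rintro ⟨p, q⟩ hp hq
      have h1 : q < 2 := lt_of_le_of_lt hp.2.2 (arctan_lt_two _)
      exact absurd hq.2.1 (by simp [rectB]; linarith)
    have hAB : Disjoint rectA.pts rectB.pts := by
      rw [Set.disjoint_left]
      rintro ⟨p, q⟩ hp hq
      have := hp.2.2
      have := hq.2.1
      simp [rectA, rectB, Rect.pts] at *
      linarith
    rintro (a | a) (b | b) hne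
    · exact disjoint_tr (hdisj a b (by simpa using hne))
    · simp only [Sum.elim_inl, Sum.elim_inr]
      split
      · exact hsmallA a
      · exact hsmallB a
    · simp only [Sum.elim_inl, Sum.elim_inr]
      split
      · exact (hsmallA b).symm
      · exact (hsmallB b).symm
    · have hab : a ≠ b := by simpa using hne
      fin_cases a <;> fin_cases b <;> simp_all (config := {failIfUnchanged := false}) <;>
        first | exact hAB | exact hAB.symm
  · -- adjacency
    have sees_comm : ∀ R S : Rect, sees R S ↔ sees S R := by
      intro R S
      unfold sees seesV seesH
      rw [Set.inter_comm, Set.inter_comm (Set.Ioo R.y1 R.y2)]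
    have hseesA : ∀ v : V, sees (trRect (f v)) rectA := by
      intro v
      right
      have hy := (f v).hy
      have h1 : (f v).y1 < ((f v).y1 + (f v).y2)/2 := by linarith
      have h2 : ((f v).y1 + (f v).y2)/2 < (f v).y2 := by linarith
      exact ⟨Real.arctan (((f v).y1 + (f v).y2)/2),
        ⟨Real.arctan_strictMono h1, Real.arctan_strictMono h2⟩,
        neg_two_lt_arctan _, arctan_lt_two _⟩
    have hseesB : ∀ v : V, sees (trRect (f v)) rectB := by
      intro v
      left
      have hx := (f v).hx
      have h1 : (f v).x1 < ((f v).x1 + (f v).x2)/2 := by linarith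
      have h2 : ((f v).x1 + (f v).x2)/2 < (f v).x2 := by linarith
      exact ⟨Real.arctan (((f v).x1 + (f v).x2)/2),
        ⟨Real.arctan_strictMono h1, Real.arctan_strictMono h2⟩,
        neg_two_lt_arctan _, arctan_lt_two _⟩
    have hnAB : ¬ sees rectA rectB := by
      rintro (⟨t, ⟨h1, h2⟩, h3, h4⟩ | ⟨t, ⟨h1, h2⟩, h3, h4⟩)
      · simp only [rectA, rectB] at *; linarith
      · simp only [rectA, rectB] at *; linarith
    rintro (a | a) (b | b) hne
    · have : (joinTwo H).Adj (Sum.inl a) (Sum.inl b) ↔ H.Adj a b := Iff.rfl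
      rw [this, hadj a b (by simpa using hne)]
      exact (sees_tr (f a) (f b)).symm
    · simp only [Sum.elim_inl, Sum.elim_inr]
      have : (joinTwo H).Adj (Sum.inl a) (Sum.inr b) := trivial
      refine iff_of_true this ?_
      split
      · exact hseesA a
      · exact hseesB a
    · simp only [Sum.elim_inl, Sum.elim_inr]
      have : (joinTwo H).Adj (Sum.inr a) (Sum.inl b) := trivial
      refine iff_of_true this ?_
      rw [sees_comm]
      split
      · exact hseesA b
      · exact hseesB b
    · have : ¬ (joinTwo H).Adj (Sum.inr a) (Sum.inr b) := fun h => h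
      refine iff_of_false this ?_
      have hab : a ≠ b := by simpa using hne
      simp only [Sum.elim_inr]
      fin_cases a <;> fin_cases b <;> simp_all (config := {failIfUnchanged := false}) <;>
        first
        | exact hnAB
        | exact fun hs => hnAB ((sees_comm _ _).mp hs)
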